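/- Let R be a commutative noetherian ring, A a finite R-algebra that is projective as an R-module, and ω := Hom_R(A,R). Then the ring homomorphism A → End_A(ω)^op into the opposite of the endomorphism ring of ω as a left A-module, sending a to the endomorphism f ↦ f·a, is bijective; likewise, the ring homomorphism A → End_{A^op}(ω) into the endomorphism ring of ω as a right A-module, sending a to the endomorphism f ↦ a·f, is bijective. -/

import Mathlib

open TensorProduct

noncomputable section

variable (R : Type) [CommRing R] (A : Type) [Ring A] [Algebra R A]

/-- The dualising bimodule `ω = Hom_R(A, R)` regarded as a left `A`-module,
with action `(a • f) x = f (x * a)`. -/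
def OmegaLeft := A →ₗ[R] R

instance : AddCommGroup (OmegaLeft R A) := inferInstanceAs (AddCommGroup (A →ₗ[R] R))

instance : FunLike (OmegaLeft R A) A R := inferInstanceAs (FunLike (A →ₗ[R] R) A R)

instance : LinearMapClass (OmegaLeft R A) R A R :=
  inferInstanceAs (LinearMapClass (A →ₗ[R] R) R A R)

instance : Module A (OmegaLeft R A) where
  smul a f := ((f : A →ₗ[R] R).comp (LinearMap.mulRight R a) : A →ₗ[R] R)
  one_smul f := DFunLike.ext _ _ fun x => by
    show ((f : A →ₗ[R] R).comp (LinearMap.mulRight R (1:A))) x = f x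
    show (f : A →ₗ[R] R) (x * 1) = f x
    rw [mul_one]
  mul_smul a b f := DFunLike.ext _ _ fun x => by
    show (f : A →ₗ[R] R) (x * (a * b)) = (f : A →ₗ[R] R) ((x * a) * b)
    rw [mul_assoc]
  smul_zero a := DFunLike.ext _ _ fun x => rfl
  smul_add a f g := DFunLike.ext _ _ fun x => rfl
  add_smul a b f := DFunLike.ext _ _ fun x => by
    show (f : A →ₗ[R] R) (x * (a + b)) = (f : A →ₗ[R] R) (x * a) + (f : A →ₗ[R] R) (x * b)
    rw [mul_add, map_add]
  zero_smul f := DFunLike.ext _ _ fun x => by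
    show (f : A →ₗ[R] R) (x * 0) = 0
    rw [mul_zero, map_zero]

@[simp] lemma OmegaLeft.smul_apply (a : A) (f : OmegaLeft R A) (x : A) :
    (a • f) x = f (x * a) := rfl

/-- The dualising bimodule `ω = Hom_R(A, R)` regarded as a right `A`-module
(i.e. a left `Aᵐᵒᵖ`-module), with action `(f • b) x = f (b * x)`. -/
def OmegaRight := A →ₗ[R] R

instance : AddCommGroup (OmegaRight R A) := inferInstanceAs (AddCommGroup (A →ₗ[R] R))

instance : FunLike (OmegaRight R A) A R := inferInstanceAs (FunLike (A →ₗ[R] R) A R)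

instance : LinearMapClass (OmegaRight R A) R A R :=
  inferInstanceAs (LinearMapClass (A →ₗ[R] R) R A R)

instance : Module Aᵐᵒᵖ (OmegaRight R A) where
  smul b f := ((f : A →ₗ[R] R).comp (LinearMap.mulLeft R b.unop) : A →ₗ[R] R)
  one_smul f := DFunLike.ext _ _ fun x => by
    show (f : A →ₗ[R] R) ((1:A) * x) = f x
    rw [one_mul]
  mul_smul a b f := DFunLike.ext _ _ fun x => by
    show (f : A →ₗ[R] R) ((b.unop * a.unop) * x) = (f : A →ₗ[R] R) (b.unop * (a.unop * x))
    rw [mul_assoc]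
  smul_zero a := DFunLike.ext _ _ fun x => rfl
  smul_add a f g := DFunLike.ext _ _ fun x => rfl
  add_smul a b f := DFunLike.ext _ _ fun x => by
    show (f : A →ₗ[R] R) ((a.unop + b.unop) * x)
        = (f : A →ₗ[R] R) (a.unop * x) + (f : A →ₗ[R] R) (b.unop * x)
    rw [add_mul, map_add]
  zero_smul f := DFunLike.ext _ _ fun x => by
    show (f : A →ₗ[R] R) (0 * x) = 0
    rw [zero_mul, map_zero]

@[simp] lemma OmegaRight.smul_apply (b : Aᵐᵒᵖ) (f : OmegaRight R A) (x : A) :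
    (b • f) x = f (b.unop * x) := rfl

/-- The canonical ring homomorphism `A → End_A(ω)ᵐᵒᵖ`, sending `a` to the
endomorphism `f ↦ f · a`, where `(f · a) x = f (a * x)`. -/
def toEndOmegaLeft : A →+* (Module.End A (OmegaLeft R A))ᵐᵒᵖ where
  toFun a := MulOpposite.op
    { toFun := fun f => (((f : A →ₗ[R] R).comp (LinearMap.mulLeft R a) : A →ₗ[R] R) : OmegaLeft R A)
      map_add' := fun f g => DFunLike.ext _ _ fun x => rfl
      map_smul' := fun b f => DFunLike.ext _ _ fun x => by
        show (f : A →ₗ[R] R) ((a * x) * b) = (f : A →ₗ[R] R) (a * (x * b))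
        rw [mul_assoc] }
  map_one' := by
    apply MulOpposite.unop_injective
    apply LinearMap.ext; intro f
    apply DFunLike.ext; intro x
    show (f : A →ₗ[R] R) (1 * x) = f x
    rw [one_mul]
  map_mul' a b := by
    apply MulOpposite.unop_injective
    apply LinearMap.ext; intro f
    apply DFunLike.ext; intro x
    show (f : A →ₗ[R] R) ((a * b) * x) = (f : A →ₗ[R] R) (a * (b * x))
    rw [mul_assoc]
  map_zero' := by
    apply MulOpposite.unop_injective
    apply LinearMap.ext; intro f
    apply DFunLike.ext; intro x
    show (f : A →ₗ[R] R) (0 * x) = 0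
    rw [zero_mul, map_zero]
  map_add' a b := by
    apply MulOpposite.unop_injective
    apply LinearMap.ext; intro f
    apply DFunLike.ext; intro x
    show (f : A →ₗ[R] R) ((a + b) * x) = (f : A →ₗ[R] R) (a * x) + (f : A →ₗ[R] R) (b * x)
    rw [add_mul, map_add]

/-- The canonical ring homomorphism `A → End_{Aᵐᵒᵖ}(ω)`, sending `a` to the
endomorphism `f ↦ a · f`, where `(a · f) x = f (x * a)`. -/
def toEndOmegaRight : A →+* Module.End Aᵐᵒᵖ (OmegaRight R A) where
  toFun a :=
    { toFun := fun f => (((f : A →ₗ[R] R).comp (LinearMap.mulRight R a) : A →ₗ[R] R) : OmegaRight R A)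
      map_add' := fun f g => DFunLike.ext _ _ fun x => rfl
      map_smul' := fun b f => DFunLike.ext _ _ fun x => by
        show (f : A →ₗ[R] R) (b.unop * (x * a)) = (f : A →ₗ[R] R) ((b.unop * x) * a)
        rw [mul_assoc] }
  map_one' := by
    apply LinearMap.ext; intro f
    apply DFunLike.ext; intro x
    show (f : A →ₗ[R] R) (x * 1) = f x
    rw [mul_one]
  map_mul' a b := by
    apply LinearMap.ext; intro f
    apply DFunLike.ext; intro x
    show (f : A →ₗ[R] R) (x * (a * b)) = (f : A →ₗ[R] R) ((x * a) * b)
    rw [mul_assoc]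
  map_zero' := by
    apply LinearMap.ext; intro f
    apply DFunLike.ext; intro x
    show (f : A →ₗ[R] R) (x * 0) = 0
    rw [mul_zero, map_zero]
  map_add' a b := by
    apply LinearMap.ext; intro f
    apply DFunLike.ext; intro x
    show (f : A →ₗ[R] R) (x * (a + b)) = (f : A →ₗ[R] R) (x * a) + (f : A →ₗ[R] R) (x * b)
    rw [mul_add, map_add]

/-- Identity conversion from linear maps to the left dualising module. -/
def toOL (R : Type) [CommRing R] (A : Type) [Ring A] [Algebra R A]
    (f : A →ₗ[R] R) : OmegaLeft R A := f

/-- Identity conversion from linear maps to the right dualising module. -/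
def toOR (R : Type) [CommRing R] (A : Type) [Ring A] [Algebra R A]
    (f : A →ₗ[R] R) : OmegaRight R A := f

theorem bijective_toEndOmega
    (R : Type) [CommRing R] [IsNoetherianRing R]
    (A : Type) [Ring A] [Algebra R A] [Module.Finite R A] [Module.Projective R A] :
    Function.Bijective (toEndOmegaLeft R A) ∧ Function.Bijective (toEndOmegaRight R A) := by
  have hev : Function.Bijective (Module.Dual.eval R A) := Module.bijective_dual_eval R A
  have hinjL : Function.Injective (toEndOmegaLeft R A) := by
    intro a b hab
    apply hev.injective
    apply LinearMap.ext; intro f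
    have h : f (a * 1) = f (b * 1) :=
      DFunLike.congr_fun
        (LinearMap.congr_fun (congrArg MulOpposite.unop hab) (toOL R A f)) 1
    rw [mul_one, mul_one] at h
    exact h
  have hinjR : Function.Injective (toEndOmegaRight R A) := by
    intro a b hab
    apply hev.injective
    apply LinearMap.ext; intro f
    have h : f (1 * a) = f (1 * b) :=
      DFunLike.congr_fun (LinearMap.congr_fun hab (toOR R A f)) 1
    rw [one_mul, one_mul] at h
    exact h
  constructor
  · refine ⟨hinjL, fun Φ => ?_⟩
    set φ := Φ.unop with hφ
    have hsm : ∀ (r : R) (f : A →ₗ[R] R),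
        toOL R A (r • f) = (algebraMap R A r) • toOL R A f := by
      intro r f
      apply DFunLike.ext; intro y
      show r • f y = f (y * algebraMap R A r)
      rw [show y * algebraMap R A r = r • y by rw [Algebra.smul_def, Algebra.commutes]]
      exact (map_smul f r y).symm
    let ξ : A → Module.Dual R (Module.Dual R A) := fun x =>
      { toFun := fun f => φ (toOL R A f) x
        map_add' := fun f g => by
          show φ (toOL R A f + toOL R A g) x = φ (toOL R A f) x + φ (toOL R A g) x
          rw [map_add]; rfl
        map_smul' := fun r f => by
          show φ (toOL R A (r • f)) x = r • φ (toOL R A f) x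
          rw [hsm, map_smul]
          show (φ (toOL R A f)) (x * algebraMap R A r) = r • (φ (toOL R A f)) x
          rw [show x * algebraMap R A r = r • x by rw [Algebra.smul_def, Algebra.commutes]]
          exact map_smul (φ (toOL R A f)) r x }
    let ψ : A → A := fun x => (Module.evalEquiv R A).symm (ξ x)
    have hψ : ∀ (f : A →ₗ[R] R) (x : A), f (ψ x) = φ (toOL R A f) x := fun f x =>
      Module.apply_evalEquiv_symm_apply R A f (ξ x)
    have hmul : ∀ x a : A, ψ (x * a) = ψ x * a := by
      intro x a
      apply hev.injective
      apply LinearMap.ext; intro f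
      show f (ψ (x * a)) = f (ψ x * a)
      calc f (ψ (x * a)) = φ (toOL R A f) (x * a) := hψ f (x * a)
        _ = (a • φ (toOL R A f)) x := rfl
        _ = φ (a • toOL R A f) x := by rw [map_smul]
        _ = (a • toOL R A f) (ψ x) := (hψ (a • toOL R A f) x).symm
        _ = f (ψ x * a) := rfl
    refine ⟨ψ 1, ?_⟩
    apply MulOpposite.unop_injective
    apply LinearMap.ext; intro f
    apply DFunLike.ext; intro x
    show (f : A →ₗ[R] R) (ψ 1 * x) = φ f x
    rw [show ψ 1 * x = ψ x from (hmul 1 x).symm.trans (by rw [one_mul])]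
    exact hψ f x
  · refine ⟨hinjR, fun φ => ?_⟩
    have hsm : ∀ (r : R) (f : A →ₗ[R] R),
        toOR R A (r • f) = (MulOpposite.op (algebraMap R A r)) • toOR R A f := by
      intro r f
      apply DFunLike.ext; intro y
      show r • f y = f (algebraMap R A r * y)
      rw [show algebraMap R A r * y = r • y by rw [Algebra.smul_def]]
      exact (map_smul f r y).symm
    let ξ : A → Module.Dual R (Module.Dual R A) := fun x =>
      { toFun := fun f => φ (toOR R A f) x
        map_add' := fun f g => by
          show φ (toOR R A f + toOR R A g) x = φ (toOR R A f) x + φ (toOR R A g) x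
          rw [map_add]; rfl
        map_smul' := fun r f => by
          show φ (toOR R A (r • f)) x = r • φ (toOR R A f) x
          rw [hsm, map_smul]
          show (φ (toOR R A f)) (algebraMap R A r * x) = r • (φ (toOR R A f)) x
          rw [show algebraMap R A r * x = r • x by rw [Algebra.smul_def]]
          exact map_smul (φ (toOR R A f)) r x }
    let ψ : A → A := fun x => (Module.evalEquiv R A).symm (ξ x)
    have hψ : ∀ (f : A →ₗ[R] R) (x : A), f (ψ x) = φ (toOR R A f) x := fun f x =>
      Module.apply_evalEquiv_symm_apply R A f (ξ x)
    have hmul : ∀ a x : A, ψ (a * x) = a * ψ x := by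
      intro a x
      apply hev.injective
      apply LinearMap.ext; intro f
      show f (ψ (a * x)) = f (a * ψ x)
      calc f (ψ (a * x)) = φ (toOR R A f) (a * x) := hψ f (a * x)
        _ = ((MulOpposite.op a) • φ (toOR R A f)) x := rfl
        _ = φ ((MulOpposite.op a) • toOR R A f) x := by rw [map_smul]
        _ = ((MulOpposite.op a) • toOR R A f) (ψ x) := (hψ _ x).symm
        _ = f (a * ψ x) := rfl
    refine ⟨ψ 1, ?_⟩
    apply LinearMap.ext; intro f
    apply DFunLike.ext; intro x
    show (f : A →ₗ[R] R) (x * ψ 1) = φ f x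
    rw [show x * ψ 1 = ψ x from (hmul x 1).symm.trans (by rw [mul_one])]
    exact hψ f x
end
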